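/- Let A be an n×n Cauchy-like matrix with generators u, v and nodes d, w (all d_i ≠ w_j, d_i distinct, w_j distinct, and all leading Schur complements having nonzero (1,1) entry up to step k). Then the generators of the k-th Schur complement A^{(k)} are given in closed form by u^{(k)}_{k+ℓ} = u_{k+ℓ}·∏_{j=1}^{k} (d_{k+ℓ} − d_j)/(d_{k+ℓ} − w_j) and v^{(k)}_{k+ℓ} = v_{k+ℓ}·∏_{j=1}^{k} (w_{k+ℓ} − w_j)/(w_{k+ℓ} − d_j), for 1 ≤ ℓ ≤ n − k. -/

import Mathlib

open Polynomial Finset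

lemma pf_key {k : ℕ} (dd ww : Fin k → ℝ) (W V K : ℝ) (c : Fin k → ℝ)
    (hww : Function.Injective ww) (hWw : ∀ t, W ≠ ww t) (hWd : ∀ t, W ≠ dd t)
    (hK : K = ∏ t, (W - ww t) / (W - dd t))
    (hc : ∀ s, c s = -(V * K) * (∏ t, (ww s - dd t)) /
        ((ww s - W) * ∏ t ∈ Finset.univ.erase s, (ww s - ww t)))
    (x : ℝ) :
    ∑ s, c s * ((x - W) * ∏ t ∈ Finset.univ.erase s, (x - ww t))
      = V * (∏ t, (x - ww t)) - V * K * ∏ t, (x - dd t) := by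
  have hdegProd : ∀ (s : Finset (Fin k)) (a : Fin k → ℝ),
      (∏ t ∈ s, (X - C (a t))).degree ≤ (s.card : WithBot ℕ) := by
    intro s a
    calc (∏ t ∈ s, (X - C (a t))).degree ≤ ∑ t ∈ s, (X - C (a t)).degree :=
          Polynomial.degree_prod_le _ _
      _ = ∑ _t ∈ s, (1 : WithBot ℕ) :=
          Finset.sum_congr rfl fun t _ => degree_X_sub_C _
      _ ≤ (s.card : WithBot ℕ) := by
          rw [Finset.sum_const, nsmul_eq_mul, mul_one]
  set P : ℝ[X] := ∑ s, Polynomial.C (c s) *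
      ((X - C W) * ∏ t ∈ Finset.univ.erase s, (X - C (ww t))) with hP
  set Q : ℝ[X] := C V * (∏ t, (X - C (ww t))) - C (V * K) * ∏ t, (X - C (dd t)) with hQ
  have hpts : (insert W (Finset.image ww Finset.univ)).card = k + 1 := by
    rw [Finset.card_insert_of_notMem (by
        simp only [Finset.mem_image, Finset.mem_univ, true_and, not_exists]
        exact fun t h => hWw t h.symm),
      Finset.card_image_of_injective _ hww]
    simp
  have hPd : P.degree < ((insert W (Finset.image ww Finset.univ)).card : WithBot ℕ) := by
    rw [hpts]
    refine lt_of_le_of_lt (Polynomial.degree_sum_le _ _) ?_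
    rw [Finset.sup_lt_iff (by exact_mod_cast WithBot.bot_lt_coe _)]
    intro b _
    have h1 : (C (c b) * ((X - C W) * ∏ t ∈ Finset.univ.erase b, (X - C (ww t)))).degree
        ≤ 0 + (1 + (((Finset.univ.erase b).card : ℕ) : WithBot ℕ)) := by
      refine le_trans (degree_mul_le _ _) (add_le_add degree_C_le ?_)
      exact le_trans (degree_mul_le _ _)
        (add_le_add (le_of_eq (degree_X_sub_C _)) (hdegProd _ _))
    have hcard : (Finset.univ.erase b).card = k - 1 := by
      rw [Finset.card_erase_of_mem (Finset.mem_univ b)]; simp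
    rw [hcard] at h1
    have hk : 0 < k := b.pos
    have hnum : (0 : WithBot ℕ) + (1 + ((k - 1 : ℕ) : WithBot ℕ)) < ((k + 1 : ℕ) : WithBot ℕ) := by
      rw [zero_add]
      rw [show (1 : WithBot ℕ) = ((1 : ℕ) : WithBot ℕ) from rfl, ← Nat.cast_add]
      exact_mod_cast by omega
    exact lt_of_le_of_lt h1 hnum
  have hQd : Q.degree < ((insert W (Finset.image ww Finset.univ)).card : WithBot ℕ) := by
    rw [hpts]
    refine lt_of_le_of_lt (Polynomial.degree_sub_le _ _) ?_
    rw [max_lt_iff]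
    constructor <;>
    · refine lt_of_le_of_lt (degree_mul_le _ _) ?_
      refine lt_of_le_of_lt (add_le_add degree_C_le (hdegProd _ _)) ?_
      rw [zero_add]
      simp only [Finset.card_univ, Fintype.card_fin]
      exact_mod_cast by omega
  have hprodww : ∀ r : Fin k, (∏ t, (ww r - ww t)) = 0 := fun r =>
    Finset.prod_eq_zero (Finset.mem_univ r) (sub_self _)
  have heval : ∀ z ∈ insert W (Finset.image ww Finset.univ), P.eval z = Q.eval z := by
    intro z hz
    rcases Finset.mem_insert.mp hz with rfl | hz
    · have h2 : (∏ t, (z - dd t)) ≠ 0 :=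
        Finset.prod_ne_zero_iff.mpr fun t _ => sub_ne_zero.mpr (hWd t)
      simp only [hP, hQ, eval_finset_sum, eval_mul, eval_sub, eval_X, eval_C, eval_prod,
        sub_self, zero_mul, mul_zero, Finset.sum_const_zero]
      rw [hK, Finset.prod_div_distrib]
      field_simp
      ring
    · obtain ⟨r, _, rfl⟩ := Finset.mem_image.mp hz
      have hQe : Q.eval (ww r) = -(V * K) * ∏ t, (ww r - dd t) := by
        simp only [hQ, eval_sub, eval_mul, eval_C, eval_prod, eval_X]
        rw [hprodww r]; ring
      have hPe : P.eval (ww r) =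
          c r * ((ww r - W) * ∏ t ∈ Finset.univ.erase r, (ww r - ww t)) := by
        simp only [hP, eval_finset_sum, eval_mul, eval_sub, eval_X, eval_C, eval_prod]
        refine Finset.sum_eq_single r (fun s _ hs => ?_) (by simp)
        have h0 : (∏ t ∈ Finset.univ.erase s, (ww r - ww t)) = 0 :=
          Finset.prod_eq_zero (Finset.mem_erase.mpr ⟨Ne.symm hs, Finset.mem_univ r⟩) (sub_self _)
        rw [h0]; ring
      rw [hPe, hQe, hc r]
      have hd1 : ww r - W ≠ 0 := sub_ne_zero.mpr fun h => hWw r h.symm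
      have hd2 : (∏ t ∈ Finset.univ.erase r, (ww r - ww t)) ≠ 0 :=
        Finset.prod_ne_zero_iff.mpr fun t ht =>
          sub_ne_zero.mpr fun h => (Finset.mem_erase.mp ht).1 (hww h.symm)
      field_simp
  have hPQ : P = Q :=
    Polynomial.eq_of_degrees_lt_of_eval_finset_eq _ hPd hQd heval
  have := congrArg (Polynomial.eval x) hPQ
  simpa only [hP, hQ, eval_finset_sum, eval_mul, eval_sub, eval_X, eval_C, eval_prod] using this

lemma pf_div {k : ℕ} (dd ww : Fin k → ℝ) (W V K : ℝ) (c : Fin k → ℝ)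
    (hww : Function.Injective ww) (hWw : ∀ t, W ≠ ww t) (hWd : ∀ t, W ≠ dd t)
    (hK : K = ∏ t, (W - ww t) / (W - dd t))
    (hc : ∀ s, c s = -(V * K) * (∏ t, (ww s - dd t)) /
        ((ww s - W) * ∏ t ∈ Finset.univ.erase s, (ww s - ww t)))
    (x : ℝ) (hxw : ∀ t, x ≠ ww t) (hxW : x ≠ W) :
    ∑ s, c s / (x - ww s)
      = V / (x - W) - V * K * (∏ t, (x - dd t) / (x - ww t)) / (x - W) := by
  have hD : (∏ t, (x - ww t)) ≠ 0 :=
    Finset.prod_ne_zero_iff.mpr fun t _ => sub_ne_zero.mpr (hxw t)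
  have hWne : x - W ≠ 0 := sub_ne_zero.mpr hxW
  have hkey := pf_key dd ww W V K c hww hWw hWd hK hc x
  have hterm : ∀ s : Fin k, c s / (x - ww s)
      = c s * ((x - W) * ∏ t ∈ Finset.univ.erase s, (x - ww t))
        / ((x - W) * ∏ t, (x - ww t)) := by
    intro s
    rw [← Finset.mul_prod_erase Finset.univ _ (Finset.mem_univ s)]
    have h1 : x - ww s ≠ 0 := sub_ne_zero.mpr (hxw s)
    have h2 : (∏ t ∈ Finset.univ.erase s, (x - ww t)) ≠ 0 :=
      Finset.prod_ne_zero_iff.mpr fun t _ => sub_ne_zero.mpr (hxw t)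
    field_simp
  calc ∑ s, c s / (x - ww s)
      = (∑ s, c s * ((x - W) * ∏ t ∈ Finset.univ.erase s, (x - ww t)))
        / ((x - W) * ∏ t, (x - ww t)) := by
        rw [Finset.sum_div]; exact Finset.sum_congr rfl fun s _ => hterm s
    _ = (V * (∏ t, (x - ww t)) - V * K * ∏ t, (x - dd t))
        / ((x - W) * ∏ t, (x - ww t)) := by rw [hkey]
    _ = V / (x - W) - V * K * (∏ t, (x - dd t) / (x - ww t)) / (x - W) := by
        rw [Finset.prod_div_distrib]
        field_simp

/-- Closed form for the generators of the `k`-th Schur complement of a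
Cauchy-like matrix: `u⁽ᵏ⁾ = u ∏ (d-d_j)/(d-w_j)`, `v⁽ᵏ⁾ = v ∏ (w-w_j)/(w-d_j)`. -/
theorem stmt_10 (k m : ℕ) (u v d w : Fin (k + m) → ℝ)
    (hdw : ∀ i j, d i ≠ w j)
    (hd : Function.Injective d) (hw : Function.Injective w)
    (A : Matrix (Fin (k + m)) (Fin (k + m)) ℝ)
    (hA : A = Matrix.of fun i j : Fin (k + m) => u i * v j / (d i - w j))
    (hlead : ∀ (l : ℕ) (hl : l ≤ k), IsUnit
      (A.submatrix (fun i : Fin l => Fin.castLE (by omega) i)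
                   (fun j : Fin l => Fin.castLE (by omega) j)).det)
    (A11 : Matrix (Fin k) (Fin k) ℝ)
    (hA11 : A11 = Matrix.of fun i j : Fin k => A (Fin.castAdd m i) (Fin.castAdd m j))
    (A12 : Matrix (Fin k) (Fin m) ℝ)
    (hA12 : A12 = Matrix.of fun (i : Fin k) (j : Fin m) => A (Fin.castAdd m i) (Fin.natAdd k j))
    (A21 : Matrix (Fin m) (Fin k) ℝ)
    (hA21 : A21 = Matrix.of fun (i : Fin m) (j : Fin k) => A (Fin.natAdd k i) (Fin.castAdd m j))
    (A22 : Matrix (Fin m) (Fin m) ℝ)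
    (hA22 : A22 = Matrix.of fun i j : Fin m => A (Fin.natAdd k i) (Fin.natAdd k j))
    (S : Matrix (Fin m) (Fin m) ℝ)
    (hS : S = A22 - A21 * A11⁻¹ * A12) :
    ∀ i j : Fin m, S i j =
      (u (Fin.natAdd k i) * ∏ t : Fin k,
          (d (Fin.natAdd k i) - d (Fin.castAdd m t)) / (d (Fin.natAdd k i) - w (Fin.castAdd m t)))
        * (v (Fin.natAdd k j) * ∏ t : Fin k,
          (w (Fin.natAdd k j) - w (Fin.castAdd m t)) / (w (Fin.natAdd k j) - d (Fin.castAdd m t)))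
        / (d (Fin.natAdd k i) - w (Fin.natAdd k j)) := by
  intro i j
  -- abbreviations (plain defs, definitionally transparent)
  have hvv : ∀ t : Fin k, v (Fin.castAdd m t) ≠ 0 := by
    intro t hv0
    have hM := hlead k le_rfl
    have h0 : ((A.submatrix (fun i : Fin k => Fin.castLE (by omega) i)
        (fun j : Fin k => Fin.castLE (by omega) j))).det = 0 := by
      apply Matrix.det_eq_zero_of_column_eq_zero t
      intro s
      simp only [Matrix.submatrix_apply, hA, Matrix.of_apply]
      rw [show v (Fin.castLE (by omega : k ≤ k + m) t) = 0 from hv0]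
      simp
    rw [h0] at hM
    simp at hM
  have hunit : IsUnit A11.det := by
    have h1 : A11 = A.submatrix (fun i : Fin k => Fin.castLE (by omega) i)
        (fun j : Fin k => Fin.castLE (by omega) j) := by
      rw [hA11]; ext s t; rfl
    rw [h1]; exact hlead k le_rfl
  -- the partial-fraction data
  set W := w (Fin.natAdd k j) with hW
  set V := v (Fin.natAdd k j) with hV
  set K := ∏ t : Fin k, (W - w (Fin.castAdd m t)) / (W - d (Fin.castAdd m t)) with hKdef
  set c : Fin k → ℝ := fun s => -(V * K) * (∏ t, (w (Fin.castAdd m s) - d (Fin.castAdd m t))) /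
      ((w (Fin.castAdd m s) - W) *
        ∏ t ∈ Finset.univ.erase s, (w (Fin.castAdd m s) - w (Fin.castAdd m t))) with hcdef
  have hwwInj : Function.Injective (fun t : Fin k => w (Fin.castAdd m t)) := by
    intro a b hab
    have h2 := congrArg Fin.val (hw hab)
    simpa [Fin.ext_iff] using h2
  have hWw : ∀ t : Fin k, W ≠ w (Fin.castAdd m t) := by
    intro t h
    have h2 := congrArg Fin.val (hw h)
    simp only [Fin.coe_natAdd, Fin.coe_castAdd] at h2
    omega
  have hWd : ∀ t : Fin k, W ≠ d (Fin.castAdd m t) := fun t => (hdw _ _).symm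
  have hdiv := pf_div (fun t : Fin k => d (Fin.castAdd m t)) (fun t => w (Fin.castAdd m t))
      W V K c hwwInj hWw hWd rfl (fun s => rfl)
  -- the explicit solution of A11 * y = A12-column-j
  set y : Fin k → ℝ := fun t => c t / v (Fin.castAdd m t) with hy
  have hmul : A11.mulVec y = fun s => A12 s j := by
    funext s
    have hx : ∀ t : Fin k, d (Fin.castAdd m s) ≠ w (Fin.castAdd m t) := fun t => hdw _ _
    have hxW : d (Fin.castAdd m s) ≠ W := hdw _ _
    have hterm : ∀ t ∈ Finset.univ, A11 s t * y t
        = u (Fin.castAdd m s) * (c t / (d (Fin.castAdd m s) - w (Fin.castAdd m t))) := by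
      intro t _
      rw [hA11, hy, hA]
      simp only [Matrix.of_apply]
      have hb := hvv t
      have hp : d (Fin.castAdd m s) - w (Fin.castAdd m t) ≠ 0 := sub_ne_zero.mpr (hx t)
      field_simp
    rw [Matrix.mulVec, dotProduct, Finset.sum_congr rfl hterm, ← Finset.mul_sum,
      hdiv (d (Fin.castAdd m s)) hx hxW]
    have hzero : (∏ t : Fin k, (d (Fin.castAdd m s) - d (Fin.castAdd m t))
        / (d (Fin.castAdd m s) - w (Fin.castAdd m t))) = 0 :=
      Finset.prod_eq_zero (Finset.mem_univ s) (by simp)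
    rw [hzero, hA12, hA]
    simp only [Matrix.of_apply]
    rw [← hW, ← hV]
    ring
  have hcol : ∀ t : Fin k, (A11⁻¹ * A12) t j = y t := by
    have h1 : A11⁻¹.mulVec (fun s => A12 s j) = y := by
      rw [← hmul, Matrix.mulVec_mulVec, Matrix.nonsing_inv_mul _ hunit, Matrix.one_mulVec]
    intro t
    have h2 := congrFun h1 t
    rw [← h2]
    simp [Matrix.mul_apply, Matrix.mulVec, dotProduct]
  -- final computation
  have hxI : ∀ t : Fin k, d (Fin.natAdd k i) ≠ w (Fin.castAdd m t) := fun t => hdw _ _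
  have hxWI : d (Fin.natAdd k i) ≠ W := hdw _ _
  have hSij : S i j = A22 i j - ∑ t : Fin k, A21 i t * y t := by
    rw [hS, Matrix.sub_apply, Matrix.mul_assoc, Matrix.mul_apply]
    congr 1
    exact Finset.sum_congr rfl fun t _ => by rw [hcol t]
  have hterm2 : ∀ t ∈ Finset.univ, A21 i t * y t
      = u (Fin.natAdd k i) * (c t / (d (Fin.natAdd k i) - w (Fin.castAdd m t))) := by
    intro t _
    rw [hA21, hy, hA]
    simp only [Matrix.of_apply]
    have hb := hvv t
    have hp : d (Fin.natAdd k i) - w (Fin.castAdd m t) ≠ 0 := sub_ne_zero.mpr (hxI t)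
    field_simp
  rw [hSij, Finset.sum_congr rfl hterm2, ← Finset.mul_sum,
    hdiv (d (Fin.natAdd k i)) hxI hxWI, hA22, hA]
  simp only [Matrix.of_apply]
  rw [← hW, ← hV]
  ring
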